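/- Assume F₀ ⊆ int(Ω) and φ is C² on Ω, where F₀ denotes the closure of the convex hull of the support of P. Then for every K > 0 there exists C_K > 0 such that for all codebooks c, c' ∈ (B̄(0,K) ∩ F₀)^k and all x ∈ Ω, |d_φ(x, c) − d_φ(x, c')| ≤ C_K · D(c, c') · (1 + ‖x‖), where D(c,c') = min_{σ ∈ Σ_k} max_{1≤j≤k} ‖c_j − c'_{σ(j)}‖ and Σ_k is the set of permutations of {1,…,k}. -/

import Mathlib

open MeasureTheory ENNReal Filter Topology
open scoped RealInnerProductSpace BigOperators

noncomputable section

variable {E : Type*} [NormedAddCommGroup E] [InnerProductSpace ℝ E] [CompleteSpace E]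
  [MeasurableSpace E] [BorelSpace E]

/-- Bregman divergence `d_φ(x,y) = φ x − φ y − ⟪∇φ(y), x − y⟫`. -/
def breg (φ : E → ℝ) (x y : E) : ℝ :=
  φ x - φ y - ⟪gradient φ y, x - y⟫

/-- Bregman divergence from a point to a codebook: `min_j d_φ(x, c_j)`. -/
def bregCode {k : ℕ} (φ : E → ℝ) (x : E) (c : Fin k → E) : ℝ :=
  ⨅ j, breg φ x (c j)

/-- Open Bregman ball of a codebook. -/
def bBall {k : ℕ} (φ : E → ℝ) (c : Fin k → E) (r : ℝ) : Set E :=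
  {x | bregCode φ x c < r ^ 2}

/-- Closed Bregman ball of a codebook. -/
def bBallc {k : ℕ} (φ : E → ℝ) (c : Fin k → E) (r : ℝ) : Set E :=
  {x | bregCode φ x c ≤ r ^ 2}

/-- Bregman sphere of a codebook. -/
def bSphere {k : ℕ} (φ : E → ℝ) (c : Fin k → E) (r : ℝ) : Set E :=
  {x | bregCode φ x c = r ^ 2}

/-- `𝒫_h`: normalized sub-measures of `P` of total mass `h`. -/
def subProb (P : Measure E) (h : ℝ) : Set (Measure E) :=
  {Pt | ∃ Q : Measure E, Q ≤ P ∧ Q Set.univ = ENNReal.ofReal h ∧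
        Pt = (ENNReal.ofReal h)⁻¹ • Q}

/-- Distortion `R(P̃, c) = ∫ d_φ(u, c) dP̃(u)`. -/
def distor {k : ℕ} (φ : E → ℝ) (Pt : Measure E) (c : Fin k → E) : ℝ :=
  ∫ x, bregCode φ x c ∂Pt

/-- The trimming radius `r_h(c)`: smallest `r ≥ 0` with
`P(B_φ(c,r)) ≤ h ≤ P(B̄_φ(c,r))`. -/
def trimRadius {k : ℕ} (P : Measure E) (φ : E → ℝ) (h : ℝ) (c : Fin k → E) : ℝ :=
  sInf {r : ℝ | 0 ≤ r ∧ P (bBall φ c r) ≤ ENNReal.ofReal h ∧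
        ENNReal.ofReal h ≤ P (bBallc φ c r)}

/-- `𝒫_h(c)`: elements of `𝒫_h` coinciding with `P/h` on the open ball
`B_φ(c, r_h(c))` and supported in the closed ball `B̄_φ(c, r_h(c))`. -/
def subProbC {k : ℕ} (P : Measure E) (φ : E → ℝ) (h : ℝ) (c : Fin k → E) :
    Set (Measure E) :=
  {Pt | Pt ∈ subProb P h ∧
    Pt.restrict (bBall φ c (trimRadius P φ h c)) =
      ((ENNReal.ofReal h)⁻¹ • P).restrict (bBall φ c (trimRadius P φ h c)) ∧
    Pt (bBallc φ c (trimRadius P φ h c))ᶜ = 0}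

/-- The `h`-trimmed distortion `R_h(c) = h·R(P̃_c, c)` for any `P̃_c ∈ 𝒫_h(c)`
(the value does not depend on the choice of `P̃_c`). -/
def trimDistor {k : ℕ} (P : Measure E) (φ : E → ℝ) (h : ℝ) (c : Fin k → E) : ℝ :=
  sInf ((fun Pt => h * distor φ Pt c) '' subProbC P φ h c)

/-- Support of a measure. -/
def msupport (P : Measure E) : Set E := {x | ∀ U ∈ nhds x, P U ≠ 0}

/-- `F₀`: closure of the convex hull of the support of `P`. -/
def F0 (P : Measure E) : Set E := closure (convexHull ℝ (msupport P))

/-- Optimal `j`-point `h`-trimmed distortion `R*_{j,h}`, over codebooks in `Ω`. -/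
def optTrim (P : Measure E) (φ : E → ℝ) (Ω : Set E) (h : ℝ) (j : ℕ) : ℝ :=
  sInf {r : ℝ | ∃ c : Fin j → E, (∀ i, c i ∈ Ω) ∧ r = trimDistor P φ h c}

/-- Distance between codebooks up to relabelling. -/
def Dcode {k : ℕ} (c c' : Fin k → E) : ℝ :=
  ⨅ σ : Equiv.Perm (Fin k), ⨆ i, ‖c i - c' (σ i)‖

/-- Empirical measure of a finite sample. -/
def empMeas {n : ℕ} (X : Fin n → E) : Measure E :=
  (n : ℝ≥0∞)⁻¹ • ∑ i, Measure.dirac (X i)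

/-- Bregman–Voronoi cell `V_i(c)`. -/
def vorCell {k : ℕ} (φ : E → ℝ) (c : Fin k → E) (i : Fin k) : Set E :=
  {x | ∀ j, j ≠ i → breg φ x (c i) ≤ breg φ x (c j)}

/-- Discernability factor `B_h` (for `k`-point quantization over `Ω`). -/
def discern (P : Measure E) (φ : E → ℝ) (Ω : Set E) (h : ℝ) (k : ℕ) : ℝ :=
  sSup {b : ℝ | 0 ≤ b ∧ b ≤ min h (1 - h) ∧
    ∀ j, 2 ≤ j → j ≤ k →
      0 < optTrim P φ Ω ((h - b) / (1 - b)) (j - 1) - optTrim P φ Ω (h / (1 - b)) j}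


-- helper: |inf f - inf g| ≤ B when pointwise |f i - g i| ≤ B
lemma abs_ciInf_sub_ciInf {k : ℕ} [Nonempty (Fin k)] (f g : Fin k → ℝ) {B : ℝ}
    (h : ∀ i, |f i - g i| ≤ B) : |(⨅ i, f i) - ⨅ i, g i| ≤ B := by
  obtain ⟨i₀, hi₀⟩ := Finite.exists_min f
  obtain ⟨j₀, hj₀⟩ := Finite.exists_min g
  have hf : (⨅ i, f i) = f i₀ :=
    le_antisymm (ciInf_le (Set.Finite.bddBelow (Set.finite_range f)) i₀) (le_ciInf hi₀)
  have hg : (⨅ i, g i) = g j₀ :=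
    le_antisymm (ciInf_le (Set.Finite.bddBelow (Set.finite_range g)) j₀) (le_ciInf hj₀)
  rw [hf, hg, abs_le]
  constructor
  · have := (abs_le.mp (h i₀)).1
    have := hj₀ i₀
    linarith
  · have := (abs_le.mp (h j₀)).2
    have := hi₀ j₀
    linarith


theorem stmt_14 {d k : ℕ} (hk : 1 ≤ k)
    (Ω : Set (EuclideanSpace ℝ (Fin d))) (hΩ : Convex ℝ Ω)
    (φ : EuclideanSpace ℝ (Fin d) → ℝ) (hsc : StrictConvexOn ℝ Ω φ) (hC2 : ContDiffOn ℝ 2 φ Ω)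
    (P : Measure (EuclideanSpace ℝ (Fin d))) [IsProbabilityMeasure P] (hsupp : P Ωᶜ = 0)
    (hF0 : F0 P ⊆ interior Ω)
    (K : ℝ) (hK : 0 < K) :
    ∃ C : ℝ, 0 < C ∧
      ∀ c c' : Fin k → EuclideanSpace ℝ (Fin d),
        (∀ j, c j ∈ Metric.closedBall (0 : EuclideanSpace ℝ (Fin d)) K ∩ F0 P) →
        (∀ j, c' j ∈ Metric.closedBall (0 : EuclideanSpace ℝ (Fin d)) K ∩ F0 P) →
        ∀ x ∈ Ω, |bregCode φ x c - bregCode φ x c'| ≤ C * Dcode c c' * (1 + ‖x‖) := by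
  classical
  haveI : Nonempty (Fin k) := ⟨⟨0, hk⟩⟩
  set U := interior Ω with hUdef
  have hU : IsOpen U := isOpen_interior
  set S : Set (EuclideanSpace ℝ (Fin d)) := Metric.closedBall 0 K ∩ F0 P with hSdef
  have hSU : S ⊆ U := fun y hy => hF0 hy.2
  have hScomp : IsCompact S :=
    (isCompact_closedBall (0 : EuclideanSpace ℝ (Fin d)) K).inter_right isClosed_closure
  have hSconv : Convex ℝ S :=
    (convex_closedBall _ _).inter (convex_convexHull ℝ _).closure
  -- C² on the open set U
  have hC2U : ContDiffOn ℝ 2 φ U := hC2.mono interior_subset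
  have h2 : ContDiffOn ℝ ((1 : WithTop ℕ∞) + 1) φ U := by
    convert hC2U using 2
    exact one_add_one_eq_two
  obtain ⟨hdφ, -, h1⟩ := (contDiffOn_succ_iff_fderiv_of_isOpen hU).mp h2
  have h1' : ContDiffOn ℝ ((0 : WithTop ℕ∞) + 1) (fderiv ℝ φ) U := by
    convert h1 using 2
    exact zero_add 1
  obtain ⟨hd1, -, h0⟩ := (contDiffOn_succ_iff_fderiv_of_isOpen hU).mp h1'
  have hcont1 : ContinuousOn (fderiv ℝ φ) U := h1.continuousOn
  have hcont2 : ContinuousOn (fderiv ℝ (fderiv ℝ φ)) U := by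
    rw [contDiffOn_zero] at h0; exact h0
  -- bounds on S
  obtain ⟨L₁', hL₁'⟩ := hScomp.exists_bound_of_continuousOn (hcont1.mono hSU)
  obtain ⟨L₂', hL₂'⟩ := hScomp.exists_bound_of_continuousOn (h0.continuousOn.mono hSU)
  set L₁ := max L₁' 0 with hL₁def
  set L₂ := max L₂' 0 with hL₂def
  have hL₁nn : 0 ≤ L₁ := le_max_right _ _
  have hL₂nn : 0 ≤ L₂ := le_max_right _ _
  have hL₁ : ∀ y ∈ S, ‖fderiv ℝ φ y‖ ≤ L₁ := fun y hy => (hL₁' y hy).trans (le_max_left _ _)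
  have hL₂ : ∀ y ∈ S, ‖fderiv ℝ (fderiv ℝ φ) y‖ ≤ L₂ :=
    fun y hy => (hL₂' y hy).trans (le_max_left _ _)
  -- Lipschitz estimates on S
  have hdiffAt : ∀ y ∈ S, DifferentiableAt ℝ φ y :=
    fun y hy => hdφ.differentiableAt (hU.mem_nhds (hSU hy))
  have hdiffAt1 : ∀ y ∈ S, DifferentiableAt ℝ (fderiv ℝ φ) y :=
    fun y hy => hd1.differentiableAt (hU.mem_nhds (hSU hy))
  have hlipφ : ∀ a ∈ S, ∀ b ∈ S, ‖φ b - φ a‖ ≤ L₁ * ‖b - a‖ := fun a ha b hb =>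
    hSconv.norm_image_sub_le_of_norm_fderiv_le hdiffAt hL₁ ha hb
  have hlipf : ∀ a ∈ S, ∀ b ∈ S, ‖fderiv ℝ φ b - fderiv ℝ φ a‖ ≤ L₂ * ‖b - a‖ :=
    fun a ha b hb => hSconv.norm_image_sub_le_of_norm_fderiv_le hdiffAt1 hL₂ ha hb
  -- gradient facts
  have hgradnorm : ∀ a b : EuclideanSpace ℝ (Fin d),
      ‖gradient φ a - gradient φ b‖ = ‖fderiv ℝ φ a - fderiv ℝ φ b‖ := by
    intro a b
    show ‖(InnerProductSpace.toDual ℝ _).symm (fderiv ℝ φ a)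
        - (InnerProductSpace.toDual ℝ _).symm (fderiv ℝ φ b)‖ = _
    rw [← map_sub]; exact LinearIsometryEquiv.norm_map _ _
  have hgradnorm1 : ∀ a : EuclideanSpace ℝ (Fin d), ‖gradient φ a‖ = ‖fderiv ℝ φ a‖ := by
    intro a
    exact LinearIsometryEquiv.norm_map _ _
  set C₀ := L₁ + L₂ + L₂ * K + L₁ with hC₀def
  -- key pointwise estimate
  have key : ∀ a ∈ S, ∀ b ∈ S, ∀ x : EuclideanSpace ℝ (Fin d),
      |breg φ x a - breg φ x b| ≤ C₀ * ‖a - b‖ * (1 + ‖x‖) := by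
    intro a ha b hb x
    have expand : breg φ x a - breg φ x b
        = (φ b - φ a) + ⟪gradient φ b - gradient φ a, x⟫
          + (⟪gradient φ a, a⟫ - ⟪gradient φ b, b⟫) := by
      simp only [breg, inner_sub_left, inner_sub_right]; ring
    have t1 : |φ b - φ a| ≤ L₁ * ‖a - b‖ := by
      have h := hlipφ a ha b hb
      rw [Real.norm_eq_abs] at h
      rw [show ‖a - b‖ = ‖b - a‖ from norm_sub_rev a b]
      exact h
    have t2 : |⟪gradient φ b - gradient φ a, x⟫| ≤ L₂ * ‖a - b‖ * ‖x‖ := by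
      calc |⟪gradient φ b - gradient φ a, x⟫| ≤ ‖gradient φ b - gradient φ a‖ * ‖x‖ :=
            abs_real_inner_le_norm _ _
        _ ≤ (L₂ * ‖a - b‖) * ‖x‖ := by
            apply mul_le_mul_of_nonneg_right _ (norm_nonneg x)
            rw [hgradnorm, show ‖a - b‖ = ‖b - a‖ from norm_sub_rev a b]
            exact hlipf a ha b hb
        _ = L₂ * ‖a - b‖ * ‖x‖ := by ring
    have t3 : |⟪gradient φ a, a⟫ - ⟪gradient φ b, b⟫| ≤ L₂ * ‖a - b‖ * K + L₁ * ‖a - b‖ := by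
      have heq : ⟪gradient φ a, a⟫ - ⟪gradient φ b, b⟫
          = ⟪gradient φ a - gradient φ b, a⟫ + ⟪gradient φ b, a - b⟫ := by
        simp only [inner_sub_left, inner_sub_right]; ring
      rw [heq]
      have ha' : ‖a‖ ≤ K := by
        have := ha.1; rwa [Metric.mem_closedBall, dist_zero_right] at this
      calc |⟪gradient φ a - gradient φ b, a⟫ + ⟪gradient φ b, a - b⟫|
          ≤ |⟪gradient φ a - gradient φ b, a⟫| + |⟪gradient φ b, a - b⟫| := abs_add_le _ _
        _ ≤ ‖gradient φ a - gradient φ b‖ * ‖a‖ + ‖gradient φ b‖ * ‖a - b‖ :=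
            add_le_add (abs_real_inner_le_norm _ _) (abs_real_inner_le_norm _ _)
        _ ≤ (L₂ * ‖a - b‖) * K + L₁ * ‖a - b‖ := by
            apply add_le_add
            · apply mul_le_mul _ ha' (norm_nonneg _) (by positivity)
              rw [hgradnorm]
              exact hlipf b hb a ha
            · apply mul_le_mul_of_nonneg_right _ (norm_nonneg _)
              rw [hgradnorm1]; exact hL₁ b hb
        _ = L₂ * ‖a - b‖ * K + L₁ * ‖a - b‖ := by ring
    have habs : |breg φ x a - breg φ x b|
        ≤ L₁ * ‖a - b‖ + L₂ * ‖a - b‖ * ‖x‖ + (L₂ * ‖a - b‖ * K + L₁ * ‖a - b‖) := by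
      rw [expand]
      calc |(φ b - φ a) + ⟪gradient φ b - gradient φ a, x⟫
            + (⟪gradient φ a, a⟫ - ⟪gradient φ b, b⟫)|
          ≤ |(φ b - φ a) + ⟪gradient φ b - gradient φ a, x⟫|
            + |⟪gradient φ a, a⟫ - ⟪gradient φ b, b⟫| := abs_add_le _ _
        _ ≤ (|φ b - φ a| + |⟪gradient φ b - gradient φ a, x⟫|)
            + |⟪gradient φ a, a⟫ - ⟪gradient φ b, b⟫| := by
            exact add_le_add (abs_add_le _ _) le_rfl
        _ ≤ _ := by exact add_le_add (add_le_add t1 t2) t3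
    have hnx : (0:ℝ) ≤ ‖x‖ := norm_nonneg x
    have hnab : (0:ℝ) ≤ ‖a - b‖ := norm_nonneg _
    rw [hC₀def]
    nlinarith [mul_nonneg hL₂nn hnab, mul_nonneg (mul_nonneg hL₁nn hnab) hnx,
      mul_nonneg (mul_nonneg (mul_nonneg hL₂nn hK.le) hnab) hnx]
  refine ⟨C₀ + 1, by positivity, ?_⟩
  intro c c' hc hc' x hx
  -- choose optimal permutation
  obtain ⟨σ₀, hσ₀⟩ := Finite.exists_min
    (fun σ : Equiv.Perm (Fin k) => ⨆ i, ‖c i - c' (σ i)‖)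
  have hD : Dcode c c' = ⨆ i, ‖c i - c' (σ₀ i)‖ :=
    le_antisymm (ciInf_le (Set.Finite.bddBelow (Set.finite_range _)) σ₀) (le_ciInf hσ₀)
  have hle : ∀ i, ‖c i - c' (σ₀ i)‖ ≤ Dcode c c' := by
    intro i
    rw [hD]
    exact le_ciSup (f := fun i => ‖c i - c' (σ₀ i)‖)
      (Set.Finite.bddAbove (Set.finite_range _)) i
  have hD0 : 0 ≤ Dcode c c' := le_trans (norm_nonneg _) (hle ⟨0, hk⟩)
  -- reindex the second infimum
  have hre : bregCode φ x c' = ⨅ j, breg φ x (c' (σ₀ j)) := by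
    rw [bregCode, iInf, iInf]
    congr 1
    ext r
    constructor
    · rintro ⟨j, rfl⟩; exact ⟨σ₀.symm j, by simp⟩
    · rintro ⟨j, rfl⟩; exact ⟨σ₀ j, rfl⟩
  rw [bregCode, hre]
  have hnx : (0:ℝ) ≤ 1 + ‖x‖ := by positivity
  have hbound : ∀ i, |breg φ x (c i) - breg φ x (c' (σ₀ i))|
      ≤ (C₀ + 1) * Dcode c c' * (1 + ‖x‖) := by
    intro i
    calc |breg φ x (c i) - breg φ x (c' (σ₀ i))|
        ≤ C₀ * ‖c i - c' (σ₀ i)‖ * (1 + ‖x‖) := key _ (hc i) _ (hc' (σ₀ i)) x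
      _ ≤ (C₀ + 1) * Dcode c c' * (1 + ‖x‖) := by
          apply mul_le_mul_of_nonneg_right _ hnx
          have hC₀nn : 0 ≤ C₀ := by rw [hC₀def]; positivity
          nlinarith [mul_le_mul_of_nonneg_left (hle i) hC₀nn, hD0]
  exact abs_ciInf_sub_ciInf _ _ hbound


end
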